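/- Let k be a commutative ring and let (V,B) be a finite graph. Then Σ_{f : V → {1,2,3,...}, B ⊆ Eqs f} x_f = p_{λ(V,B)} in k[[x_1,x_2,x_3,...]], where x_f denotes the monomial Π_{v∈V} x_{f(v)}. -/

import Mathlib

open scoped Classical

noncomputable section

/-- The `n`-th power sum symmetric function `p_n = ∑_{j ≥ 1} x_j^n` (with `p_0 = 1`),
as a multivariate power series over `k` in variables indexed by positive integers. -/
def powerSum (k : Type*) [CommRing k] (n : ℕ) : MvPowerSeries ℕ+ k :=
  fun d => if ∃ j : ℕ+, d = Finsupp.single j n then 1 else 0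

/-- The exponent vector of the monomial `x_f = ∏_{v ∈ V} x_{f v}` attached to a
coloring `f : V → ℕ+`. -/
def colorMonomial {V : Type*} [Fintype V] (f : V → ℕ+) : ℕ+ →₀ ℕ :=
  ∑ v : V, Finsupp.single (f v) 1

/-- `p_{λ(V,B)}`: the product of `p_{|c|}` over all connected components `c` of the
graph `(V, B)`. -/
def pLambda (k : Type*) [CommRing k] {V : Type*} (B : Finset (Sym2 V)) :
    MvPowerSeries ℕ+ k :=
  ∏ᶠ c : (SimpleGraph.fromEdgeSet (↑B : Set (Sym2 V))).ConnectedComponent,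
    powerSum k (Nat.card c.supp)

/-- `Eqs f`: the set of all 2-element subsets `{u, w}` of `V` with `u ≠ w` and
`f u = f w`. -/
def Eqs {V Y : Type*} [Fintype V] [DecidableEq V] (f : V → Y) : Finset (Sym2 V) :=
  Finset.univ.filter fun e => ∃ u w : V, u ≠ w ∧ f u = f w ∧ e = s(u, w)

/-- For a finite graph `(V, B)`:
`∑_{f : V → ℕ+, B ⊆ Eqs f} x_f = p_{λ(V,B)}`. The left-hand side is the power series
whose coefficient at the monomial with exponent vector `d` is the number of maps
`f : V → ℕ+` with `B ⊆ Eqs f` whose monomial `x_f = ∏_{v ∈ V} x_{f v}` has exponent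
vector `d`. -/
theorem sum_over_Eqs_eq_pLambda
    (k : Type*) [CommRing k] {V : Type*} [Fintype V] [DecidableEq V]
    (B : Finset (Sym2 V)) (hB : ∀ e ∈ B, ¬ e.IsDiag) :
    (fun d => (Set.ncard {f : V → ℕ+ | B ⊆ Eqs f ∧ colorMonomial f = d} : k)
        : MvPowerSeries ℕ+ k) =
      pLambda k B := by
  classical
  set G := SimpleGraph.fromEdgeSet (↑B : Set (Sym2 V)) with hGdef
  -- characterization of `B ⊆ Eqs f`
  have hadj : ∀ {a b : V}, G.Adj a b → ∀ f : V → ℕ+, B ⊆ Eqs f → f a = f b := by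
    intro a b hab f hf
    rw [hGdef, SimpleGraph.fromEdgeSet_adj] at hab
    have h1 : s(a, b) ∈ Eqs f := hf hab.1
    simp only [Eqs, Finset.mem_filter, Finset.mem_univ, true_and] at h1
    obtain ⟨u, w, _, hfu, he⟩ := h1
    rw [Sym2.eq_iff] at he
    rcases he with ⟨rfl, rfl⟩ | ⟨rfl, rfl⟩
    · exact hfu
    · exact hfu.symm
  have hreach : ∀ (f : V → ℕ+), B ⊆ Eqs f → ∀ {u w : V}, G.Reachable u w → f u = f w := by
    intro f hf u w hr
    obtain ⟨p⟩ := hr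
    induction p with
    | nil => rfl
    | cons h _ ih => exact (hadj h f hf).trans ih
  have key : ∀ f : V → ℕ+, B ⊆ Eqs f ↔
      ∀ u w : V, G.connectedComponentMk u = G.connectedComponentMk w → f u = f w := by
    intro f
    constructor
    · intro hf u w h
      exact hreach f hf (SimpleGraph.ConnectedComponent.exact h)
    · intro hf e he
      induction e with
      | _ a b =>
        have hne : a ≠ b := by
          have := hB _ he
          simpa [Sym2.mk_isDiag_iff] using this
        have hadj' : G.Adj a b := by
          rw [hGdef, SimpleGraph.fromEdgeSet_adj]
          exact ⟨by exact_mod_cast he, hne⟩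
        have : f a = f b :=
          hf a b (SimpleGraph.ConnectedComponent.sound hadj'.reachable)
        simp only [Eqs, Finset.mem_filter, Finset.mem_univ, true_and]
        exact ⟨a, b, hne, this, rfl⟩
  have : Finite G.ConnectedComponent :=
    Finite.of_surjective G.connectedComponentMk Quot.mk_surjective
  have : Fintype G.ConnectedComponent := Fintype.ofFinite _
  set n : G.ConnectedComponent → ℕ := fun c => Nat.card c.supp with hn
  -- representatives
  have hrepex : ∀ c : G.ConnectedComponent, ∃ v, G.connectedComponentMk v = c :=
    fun c => Quot.exists_rep c
  choose rep hrep using hrepex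
  -- cardinality of component supports as filters
  have hncard : ∀ c : G.ConnectedComponent,
      (Finset.univ.filter fun v => G.connectedComponentMk v = c).card = n c := by
    intro c
    show _ = Nat.card c.supp
    rw [Nat.card_coe_set_eq, Set.ncard_eq_toFinset_card']
    congr 1
    ext v
    simp [SimpleGraph.ConnectedComponent.mem_supp_iff]
  have hnpos : ∀ c : G.ConnectedComponent, n c ≠ 0 := by
    intro c h
    rw [← hncard c, Finset.card_eq_zero] at h
    have : rep c ∈ Finset.univ.filter fun v => G.connectedComponentMk v = c := by
      simp [hrep c]
    simp [h] at this
  -- monomial of a coloring constant on components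
  have hmono : ∀ f : V → ℕ+,
      (∀ u w : V, G.connectedComponentMk u = G.connectedComponentMk w → f u = f w) →
      colorMonomial f = ∑ c : G.ConnectedComponent, Finsupp.single (f (rep c)) (n c) := by
    intro f hf
    rw [colorMonomial,
      ← Finset.sum_fiberwise_of_maps_to (fun v _ => Finset.mem_univ (G.connectedComponentMk v))
        (fun v => Finsupp.single (f v) 1)]
    refine Finset.sum_congr rfl fun c _ => ?_
    have : ∀ v ∈ Finset.univ.filter fun v => G.connectedComponentMk v = c,
        Finsupp.single (f v) 1 = Finsupp.single (f (rep c)) 1 := by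
      intro v hv
      simp only [Finset.mem_filter] at hv
      rw [hf v (rep c) (by rw [hv.2, hrep c])]
    rw [Finset.sum_congr rfl this, Finset.sum_const, hncard c]
    ext j
    simp [Finsupp.single_apply]
  -- rewrite RHS as a sum over finsuppAntidiag
  funext d
  have hP : pLambda k B =
      ∏ c : G.ConnectedComponent, powerSum k (n c) := finprod_eq_prod_of_fintype _
  have hco : pLambda k B d =
      ∑ l ∈ Finset.finsuppAntidiag (Finset.univ : Finset G.ConnectedComponent) d,
        if ∀ c : G.ConnectedComponent, ∃ j : ℕ+, l c = Finsupp.single j (n c)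
        then (1 : k) else 0 := by
    rw [hP, show (∏ c : G.ConnectedComponent, powerSum k (n c)) d
          = MvPowerSeries.coeff d (∏ c : G.ConnectedComponent, powerSum k (n c)) from rfl,
      MvPowerSeries.coeff_prod]
    refine Finset.sum_congr rfl fun l _ => ?_
    have h1 : ∀ c : G.ConnectedComponent,
        MvPowerSeries.coeff (l c) (powerSum k (n c)) =
          if ∃ j : ℕ+, l c = Finsupp.single j (n c) then (1 : k) else 0 := fun c => rfl
    rw [Finset.prod_congr rfl fun c _ => h1 c, Finset.prod_boole]
    simp
  show ((Set.ncard {f : V → ℕ+ | B ⊆ Eqs f ∧ colorMonomial f = d} : ℕ) : k) = pLambda k B d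
  rw [hco, Finset.sum_boole]
  congr 1
  -- now a counting identity in ℕ
  set T := (Finset.finsuppAntidiag (Finset.univ : Finset G.ConnectedComponent) d).filter
      (fun l => ∀ c : G.ConnectedComponent, ∃ j : ℕ+, l c = Finsupp.single j (n c)) with hT
  have hfin : {f : V → ℕ+ | B ⊆ Eqs f ∧ colorMonomial f = d}.Finite := by
    apply (Set.Finite.pi (fun _ : V => d.finite_support)).subset
    intro f hf
    simp only [Set.mem_pi, Set.mem_univ, forall_true_left]
    intro v
    simp only [Set.mem_setOf_eq] at hf
    have h0 : colorMonomial f (f v) ≠ 0 := by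
      rw [colorMonomial, Finset.sum_apply']
      intro h
      have := Finset.sum_eq_zero_iff.mp h v (Finset.mem_univ v)
      simp [Finsupp.single_apply] at this
    rw [hf.2] at h0
    simpa using Finsupp.mem_support_iff.mpr h0
  have : Fintype {f : V → ℕ+ | B ⊆ Eqs f ∧ colorMonomial f = d} := hfin.fintype
  rw [Set.ncard_eq_toFinset_card']
  apply Finset.card_bij
    (fun f _ => Finsupp.equivFunOnFinite.symm
      (fun c => Finsupp.single (f (rep c)) (n c)))
  · -- maps into T
    intro f hf
    simp only [Set.mem_toFinset, Set.mem_setOf_eq] at hf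
    have hconst := (key f).1 hf.1
    rw [hT, Finset.mem_filter, Finset.mem_finsuppAntidiag]
    refine ⟨⟨?_, fun c _ => Finset.mem_univ c⟩, fun c => ⟨f (rep c), rfl⟩⟩
    rw [show (Finset.univ.sum fun c => Finsupp.equivFunOnFinite.symm
        (fun c => Finsupp.single (f (rep c)) (n c)) c)
        = ∑ c : G.ConnectedComponent, Finsupp.single (f (rep c)) (n c) from rfl]
    rw [← hmono f hconst]
    exact hf.2
  · -- injective
    intro f hf g hg h
    simp only [Set.mem_toFinset, Set.mem_setOf_eq] at hf hg
    have hconstf := (key f).1 hf.1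
    have hconstg := (key g).1 hg.1
    funext v
    have := congrArg (fun l => Finsupp.equivFunOnFinite l (G.connectedComponentMk v)) h
    simp only [Equiv.apply_symm_apply] at this
    rw [Finsupp.single_left_inj (hnpos _)] at this
    calc f v = f (rep (G.connectedComponentMk v)) := hconstf _ _ (by rw [hrep])
    _ = g (rep (G.connectedComponentMk v)) := this
    _ = g v := hconstg _ _ (by rw [hrep])
  · -- surjective
    intro l hl
    rw [hT, Finset.mem_filter, Finset.mem_finsuppAntidiag] at hl
    obtain ⟨⟨hsum, -⟩, hex⟩ := hl
    choose g hg using hex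
    refine ⟨fun v => g (G.connectedComponentMk v), ?_, ?_⟩
    · have hconst : ∀ u w : V,
          G.connectedComponentMk u = G.connectedComponentMk w →
            g (G.connectedComponentMk u) = g (G.connectedComponentMk w) := by
        intro u w h; rw [h]
      simp only [Set.mem_toFinset, Set.mem_setOf_eq]
      refine ⟨(key _).2 hconst, ?_⟩
      rw [hmono _ hconst, ← hsum]
      refine Finset.sum_congr rfl fun c _ => ?_
      rw [hrep c, ← hg c]
    · ext c
      simp only [Finsupp.coe_equivFunOnFinite_symm]
      rw [hrep c, ← hg c]
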